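/- If the LP min cᵀx s.t. Ax = b, Dx ≥ e, diag(σ)x ≥ 0 is bounded and x^ℓ is feasible with direction ξ satisfying Aξ = 0, D^𝒜ξ = 0, cᵀξ = −1, ξ_{𝒮^c} = 0, then the step size α = min( min_{i∈𝒜^c, d_iᵀξ<0} (e_i − d_iᵀx^ℓ)/(d_iᵀξ), min_{j∈𝒮, σ_jξ_j<0} −x^ℓ_j/ξ_j ) is finite and positive, and x^ℓ + αξ is feasible with strictly smaller objective value. -/

import Mathlib

open Finset Pointwise

noncomputable def l1 {n : ℕ} (x : Fin n → ℝ) : ℝ := ∑ j, |x j|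

noncomputable def linf {m : ℕ} (x : Fin m → ℝ) : ℝ := ⨆ i, |x i|

def SignSet {n : ℕ} (x : Fin n → ℝ) : Set (Fin n → ℝ) :=
  {ξ | (∀ j, |ξ j| ≤ 1) ∧ ∀ j, x j ≠ 0 → ξ j = Real.sign (x j)}

def Feas {m n : ℕ} (A : Matrix (Fin m) (Fin n) ℝ) (b : Fin m → ℝ) (δ : ℝ)
    (x : Fin n → ℝ) : Prop := linf (A.mulVec x - b) ≤ δ

def IsOpt {m n : ℕ} (A : Matrix (Fin m) (Fin n) ℝ) (b : Fin m → ℝ) (δ : ℝ)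
    (x : Fin n → ℝ) : Prop := Feas A b δ x ∧ ∀ z, Feas A b δ z → l1 x ≤ l1 z

def DualCert {m n : ℕ} (A : Matrix (Fin m) (Fin n) ℝ) (b : Fin m → ℝ) (δ : ℝ)
    (x : Fin n → ℝ) (y : Fin m → ℝ) : Prop :=
  (-(A.transpose.mulVec y) ∈ SignSet x) ∧ (A.mulVec x - b ∈ δ • SignSet y)

open Classical in
noncomputable def stepSet {n k : ℕ} (D : Matrix (Fin k) (Fin n) ℝ) (e : Fin k → ℝ)
    (σ : Fin n → ℝ) (x ξ : Fin n → ℝ) : Finset ℝ :=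
  ((Finset.univ.filter (fun i : Fin k => e i < D.mulVec x i ∧ D.mulVec ξ i < 0)).image
      (fun i => (e i - D.mulVec x i) / D.mulVec ξ i)) ∪
    ((Finset.univ.filter (fun j : Fin n => x j ≠ 0 ∧ σ j * ξ j < 0)).image
      (fun j => -(x j) / ξ j))


lemma feas_step {m n k : ℕ}
    (A : Matrix (Fin m) (Fin n) ℝ) (b : Fin m → ℝ) (D : Matrix (Fin k) (Fin n) ℝ)
    (e : Fin k → ℝ) (σ : Fin n → ℝ) (hσ : ∀ j, σ j = 1 ∨ σ j = -1)
    (x ξ : Fin n → ℝ)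
    (hxA : A.mulVec x = b) (hxD : ∀ i, e i ≤ D.mulVec x i)
    (hxσ : ∀ j, 0 ≤ σ j * x j)
    (hAξ : A.mulVec ξ = 0)
    (hDξ : ∀ i, D.mulVec x i = e i → D.mulVec ξ i = 0)
    (hξsupp : ∀ j, x j = 0 → ξ j = 0)
    (α : ℝ) (hα0 : 0 ≤ α)
    (hαD : ∀ i, e i < D.mulVec x i → D.mulVec ξ i < 0 →
      α ≤ (e i - D.mulVec x i) / D.mulVec ξ i)
    (hασ : ∀ j, x j ≠ 0 → σ j * ξ j < 0 → α ≤ -(x j) / ξ j) :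
    A.mulVec (x + α • ξ) = b ∧ (∀ i, e i ≤ D.mulVec (x + α • ξ) i) ∧
      ∀ j, 0 ≤ σ j * (x + α • ξ) j := by
  have hσ0 : ∀ j, σ j ≠ 0 := by
    intro j; rcases hσ j with h | h <;> rw [h] <;> norm_num
  refine ⟨?_, ?_, ?_⟩
  · rw [Matrix.mulVec_add, Matrix.mulVec_smul, hAξ, smul_zero, add_zero, hxA]
  · intro i
    rw [Matrix.mulVec_add, Matrix.mulVec_smul]
    simp only [Pi.add_apply, Pi.smul_apply, smul_eq_mul]
    rcases eq_or_lt_of_le (hxD i) with heq | hlt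
    · rw [hDξ i heq.symm, mul_zero, add_zero, ← heq]
    · rcases le_or_gt 0 (D.mulVec ξ i) with h0 | h0
      · nlinarith
      · have := hαD i hlt h0
        have h2 : α * D.mulVec ξ i ≥ (e i - D.mulVec x i) / D.mulVec ξ i * D.mulVec ξ i :=
          mul_le_mul_of_nonpos_right this h0.le
        rw [div_mul_cancel₀ _ h0.ne] at h2
        linarith
  · intro j
    simp only [Pi.add_apply, Pi.smul_apply, smul_eq_mul]
    rcases eq_or_ne (x j) 0 with hx0 | hx0
    · rw [hx0, hξsupp j hx0, mul_zero, zero_add, mul_zero]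
    · rcases le_or_gt 0 (σ j * ξ j) with h0 | h0
      · have := hxσ j; nlinarith
      · have hb := hασ j hx0 h0
        have hξ0 : ξ j ≠ 0 := by
          intro h; rw [h, mul_zero] at h0; exact lt_irrefl _ h0
        have h2 : α * (σ j * ξ j) ≥ (-(x j) / ξ j) * (σ j * ξ j) :=
          mul_le_mul_of_nonpos_right hb h0.le
        have h3 : (-(x j) / ξ j) * (σ j * ξ j) = -(σ j * x j) := by
          field_simp
        rw [h3] at h2
        nlinarith

lemma objective_drop {n : ℕ} (c x ξ : Fin n → ℝ) (hcξ : (∑ j, c j * ξ j) = -1)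
    (α : ℝ) : (∑ j, c j * (x + α • ξ) j) = (∑ j, c j * x j) - α := by
  have : ∀ j, c j * (x + α • ξ) j = c j * x j + α * (c j * ξ j) := by
    intro j; simp [Pi.add_apply]; ring
  simp_rw [this, Finset.sum_add_distrib, ← Finset.mul_sum, hcξ]
  ring

lemma step_pos {n k : ℕ} (D : Matrix (Fin k) (Fin n) ℝ) (e : Fin k → ℝ)
    (σ : Fin n → ℝ) (hσ : ∀ j, σ j = 1 ∨ σ j = -1) (x ξ : Fin n → ℝ)
    (hxσ : ∀ j, 0 ≤ σ j * x j) (y : ℝ) (hy : y ∈ stepSet D e σ x ξ) : 0 < y := by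
  classical
  unfold stepSet at hy
  rcases Finset.mem_union.1 hy with hy | hy
  · obtain ⟨i, hi, rfl⟩ := Finset.mem_image.1 hy
    obtain ⟨-, h1, h2⟩ := Finset.mem_filter.1 hi
    exact div_pos_of_neg_of_neg (by linarith) h2
  · obtain ⟨j, hj, rfl⟩ := Finset.mem_image.1 hy
    obtain ⟨-, h1, h2⟩ := Finset.mem_filter.1 hj
    have hσx : 0 < σ j * x j := lt_of_le_of_ne (hxσ j)
      (fun h => h1 (by rcases hσ j with hs | hs <;> rw [hs] at h <;> nlinarith [h.symm]))
    have hxξ : x j * ξ j < 0 := by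
      rcases hσ j with hs | hs <;> rw [hs] at hσx h2 <;> nlinarith
    rcases lt_or_gt_of_ne (fun h : ξ j = 0 => by rw [h, mul_zero] at hxξ; exact lt_irrefl _ hxξ) with hξ | hξ
    · exact div_pos_of_neg_of_neg (by nlinarith) hξ
    · exact div_pos (by nlinarith) hξ

theorem step_size_positive_and_feasible {m n k : ℕ} (c : Fin n → ℝ)
    (A : Matrix (Fin m) (Fin n) ℝ) (b : Fin m → ℝ) (D : Matrix (Fin k) (Fin n) ℝ)
    (e : Fin k → ℝ) (σ : Fin n → ℝ) (hσ : ∀ j, σ j = 1 ∨ σ j = -1)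
    (hbdd : ∃ L : ℝ, ∀ z : Fin n → ℝ,
      (A.mulVec z = b ∧ (∀ i, e i ≤ D.mulVec z i) ∧ ∀ j, 0 ≤ σ j * z j) →
      L ≤ ∑ j, c j * z j)
    (x ξ : Fin n → ℝ)
    (hxA : A.mulVec x = b) (hxD : ∀ i, e i ≤ D.mulVec x i)
    (hxσ : ∀ j, 0 ≤ σ j * x j)
    (hAξ : A.mulVec ξ = 0)
    (hDξ : ∀ i, D.mulVec x i = e i → D.mulVec ξ i = 0)
    (hcξ : (∑ j, c j * ξ j) = -1)
    (hξsupp : ∀ j, x j = 0 → ξ j = 0) :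
    ∃ hT : (stepSet D e σ x ξ).Nonempty,
      0 < (stepSet D e σ x ξ).min' hT ∧
      (A.mulVec (x + (stepSet D e σ x ξ).min' hT • ξ) = b ∧
        (∀ i, e i ≤ D.mulVec (x + (stepSet D e σ x ξ).min' hT • ξ) i) ∧
        ∀ j, 0 ≤ σ j * (x + (stepSet D e σ x ξ).min' hT • ξ) j) ∧
      (∑ j, c j * (x + (stepSet D e σ x ξ).min' hT • ξ) j) < ∑ j, c j * x j := by
  classical
  have hmemD : ∀ i, e i < D.mulVec x i → D.mulVec ξ i < 0 →
      (e i - D.mulVec x i) / D.mulVec ξ i ∈ stepSet D e σ x ξ := by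
    intro i h1 h2
    unfold stepSet
    exact Finset.mem_union_left _ (Finset.mem_image.2
      ⟨i, Finset.mem_filter.2 ⟨Finset.mem_univ _, h1, h2⟩, rfl⟩)
  have hmemS : ∀ j, x j ≠ 0 → σ j * ξ j < 0 →
      -(x j) / ξ j ∈ stepSet D e σ x ξ := by
    intro j h1 h2
    unfold stepSet
    exact Finset.mem_union_right _ (Finset.mem_image.2
      ⟨j, Finset.mem_filter.2 ⟨Finset.mem_univ _, h1, h2⟩, rfl⟩)
  have hne : (stepSet D e σ x ξ).Nonempty := by
    by_contra hemp
    rw [Finset.not_nonempty_iff_eq_empty] at hemp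
    obtain ⟨L, hL⟩ := hbdd
    have hLx : L ≤ ∑ j, c j * x j := hL x ⟨hxA, hxD, hxσ⟩
    set α : ℝ := (∑ j, c j * x j) - L + 1 with hαdef
    have hα0 : 0 ≤ α := by linarith
    have hfeas := feas_step A b D e σ hσ x ξ hxA hxD hxσ hAξ hDξ hξsupp α hα0
      (fun i h1 h2 => absurd (hemp ▸ hmemD i h1 h2) (Finset.notMem_empty _))
      (fun j h1 h2 => absurd (hemp ▸ hmemS j h1 h2) (Finset.notMem_empty _))
    have := hL _ hfeas
    rw [objective_drop c x ξ hcξ] at this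
    linarith
  have hpos : 0 < (stepSet D e σ x ξ).min' hne :=
    (Finset.lt_min'_iff _ _).2 (fun y hy => step_pos D e σ hσ x ξ hxσ y hy)
  refine ⟨hne, hpos, ?_, ?_⟩
  · exact feas_step A b D e σ hσ x ξ hxA hxD hxσ hAξ hDξ hξsupp _ hpos.le
      (fun i h1 h2 => Finset.min'_le _ _ (hmemD i h1 h2))
      (fun j h1 h2 => Finset.min'_le _ _ (hmemS j h1 h2))
  · rw [objective_drop c x ξ hcξ]
    linarith
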